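/- Let n ≥ 1 and let K ⊆ ℝⁿ be a nonempty compact ball-body. Then the Minkowski difference K − K^c = {x − y : x ∈ K, y ∈ K^c} equals the closed unit ball B(0,1); equivalently, for every unit vector u ∈ ℝⁿ the support functions satisfy h_{K^c}(u) = 1 − h_K(−u). -/

import Mathlib

open Metric Set Pointwise

noncomputable section

/-- The `c`-dual of a set `A ⊆ ℝⁿ`. -/
def cDual {n : ℕ} (A : Set (EuclideanSpace ℝ (Fin n))) : Set (EuclideanSpace ℝ (Fin n)) :=
  {y | ∀ x ∈ A, ‖x - y‖ ≤ 1}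

/-- The support function of a set: `h_K(u) = sup_{x ∈ K} ⟨x, u⟩`. -/
def suppFn {n : ℕ} (K : Set (EuclideanSpace ℝ (Fin n))) (u : EuclideanSpace ℝ (Fin n)) : ℝ :=
  sSup ((fun x => (inner ℝ x u : ℝ)) '' K)

local notation "⟪" x ", " y "⟫" => @inner ℝ _ _ x y

lemma auxEps (β r t h : ℝ) (hr0 : 0 < r) (hr2 : r ≤ 2) (ht : 0 ≤ t) (hout : 2*t < r^2)
    (hβ0 : 0 ≤ β) (hβ1 : β ≤ 1) (hβpos : 0 < β) (hβr2 : β^2*r^2 = r^2 - t^2)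
    (hh0 : 0 ≤ h) (hh1 : h ≤ 1) (hh2 : h^2 = 1 - r^2/4) :
    0 < β*r^2 - 2*t*h ∧ β*r^2 - 2*t*h ≤ 4 ∧ β*r^2 - 2*t*h ≤ r^2 := by
  have hid : (β*r^2 - 2*t*h) * (β*r^2 + 2*t*h) = (r^2 - 2*t)*(r^2 + 2*t) := by
    linear_combination r^2 * hβr2 - 4*t^2*hh2
  have hpos : 0 < (r^2 - 2*t)*(r^2+2*t) := by nlinarith
  have hsum : 0 < β*r^2 + 2*t*h := by nlinarith
  refine ⟨by nlinarith, ?_, ?_⟩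
  · nlinarith [mul_nonneg ht hh0, mul_nonneg (by linarith : (0:ℝ) ≤ 1 - β) (sq_nonneg r),
      mul_nonneg (by linarith : (0:ℝ) ≤ 2 - r) (by linarith : (0:ℝ) ≤ 2 + r)]
  · nlinarith [mul_nonneg ht hh0, mul_nonneg (by linarith : (0:ℝ) ≤ 1 - β) (sq_nonneg r)]

lemma auxA (r t β h ε δ sW Y : ℝ)
    (hr0 : 0 < r) (hr2 : r ≤ 2) (ht : 0 ≤ t) (ht2 : t ≤ 2) (hβpos : 0 < β) (hβ1 : β ≤ 1)
    (hh0 : 0 ≤ h)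
    (hε_def : ε = β*r^2 - 2*t*h) (hε : 0 < ε) (hε4 : ε ≤ 4)
    (hδ_def : δ = ε^2/128) (hδr : δ < r)
    (hsum0 : 0 < sW + h)
    (hYid : Y * (sW + h) = δ * (r - δ))
    (hsWub : sW ≤ h + ε/8) :
    δ * t < Y * β * r := by
  have hδ0 : 0 < δ := by rw [hδ_def]; positivity
  have hkey : δ * t * (sW + h) < β * r * (δ * (r - δ)) := by
    have hb1 : δ*t*(sW+h) ≤ δ*t*(2*h + ε/8) := by
      apply mul_le_mul_of_nonneg_left _ (by positivity)
      linarith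
    have hb2 : β*r*(δ*(r-δ)) - δ*t*(2*h+ε/8) = δ*(ε - β*r*δ - t*ε/8) := by
      rw [hε_def]; ring
    have hb3 : β*r*δ ≤ ε/16 := by
      have hbr : β*r ≤ 2 := by
        calc β*r ≤ 1*r := mul_le_mul_of_nonneg_right hβ1 hr0.le
        _ = r := one_mul r
        _ ≤ 2 := hr2
      have h5 : β*r*δ ≤ 2*δ := by
        have h6 := mul_le_mul_of_nonneg_right hbr hδ0.le
        linarith
      have e1 : ε^2 ≤ 4*ε := by
        have h9 := mul_le_mul_of_nonneg_left hε4 hε.le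
        calc ε^2 = ε*ε := sq ε
        _ ≤ ε*4 := h9
        _ = 4*ε := by ring
      linarith [h5, e1, hδ_def]
    have hb4 : t*ε/8 ≤ ε/4 := by
      have h6 := mul_le_mul_of_nonneg_right ht2 hε.le
      linarith
    nlinarith
  by_contra hx
  push_neg at hx
  have h6 := mul_le_mul_of_nonneg_right hx hsum0.le
  have h7 : β*r*(δ*(r-δ)) = (Y*β*r)*(sW+h) := by rw [← hYid]; ring
  linarith

lemma auxB (r δ h sW α s fw : ℝ)
    (hr0 : 0 < r) (hδ0 : 0 < δ) (hδr : δ < r) (hh0 : 0 ≤ h) (hh2 : h^2 = 1 - r^2/4)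
    (hsW2 : sW^2 = h^2 + δ*(r-δ)) (hsWh : h ≤ sW)
    (hs0 : 0 ≤ s) (hfw : |fw| ≤ s)
    (hn0 : α^2 + s^2 ≤ 1) (hn1 : (α-r)^2 + s^2 ≤ 1) :
    (δ - α)^2 + ((sW-h)^2 - 2*(sW-h)*fw + s^2) ≤ 1 := by
  have hY0 : 0 ≤ sW - h := by linarith
  have hfw' := abs_le.mp hfw
  have hb : (δ - α)^2 + ((sW-h)^2 - 2*(sW-h)*fw + s^2)
      ≤ (δ-α)^2 + (sW-h)^2 + 2*(sW-h)*s + s^2 := by nlinarith [mul_nonneg hY0 (by linarith : 0 ≤ s + fw)]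
  have hY2 : (sW-h)^2 + 2*(sW-h)*h = δ*(r-δ) := by linear_combination hsW2
  rcases le_total α (r/2) with hα | hα
  · have hsh : s ≤ h := by nlinarith
    nlinarith [mul_nonneg (by linarith : (0:ℝ) ≤ r - 2*α) (by linarith : (0:ℝ) ≤ r - δ),
      mul_le_mul_of_nonneg_left hsh (by linarith : (0:ℝ) ≤ 2*(sW-h))]
  · have hsh : s ≤ h := by nlinarith
    nlinarith [mul_nonneg (by linarith : (0:ℝ) ≤ 2*α - r) hδ0.le,
      mul_le_mul_of_nonneg_left hsh (by linarith : (0:ℝ) ≤ 2*(sW-h))]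

lemma auxSqrtUB (h δ r ε : ℝ) (hh0 : 0 ≤ h) (hδ0 : 0 < δ) (hδr : δ < r) (hr2 : r ≤ 2)
    (hδ_def : δ = ε^2/128) (hε : 0 < ε) :
    Real.sqrt (h^2 + δ*(r-δ)) ≤ h + ε/8 := by
  have h1 : Real.sqrt (δ*r) ≤ ε/8 := by
    have h2 : δ * r ≤ (ε/8)^2 := by
      rw [hδ_def]
      nlinarith [mul_nonneg (sq_nonneg ε) (by linarith : (0:ℝ) ≤ 2 - r)]
    calc Real.sqrt (δ*r) ≤ Real.sqrt ((ε/8)^2) := Real.sqrt_le_sqrt h2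
    _ = ε/8 := Real.sqrt_sq (by linarith)
  have h3 : (Real.sqrt (δ*r))^2 = δ*r :=
    Real.sq_sqrt (mul_nonneg hδ0.le (hδ0.trans hδr).le)
  have h2 : h^2 + δ*(r-δ) ≤ (h + Real.sqrt (δ*r))^2 := by
    nlinarith [Real.sqrt_nonneg (δ*r), mul_nonneg hh0 (Real.sqrt_nonneg (δ*r)), mul_pos hδ0 hδ0]
  calc Real.sqrt (h^2 + δ*(r-δ)) ≤ Real.sqrt ((h + Real.sqrt (δ*r))^2) := Real.sqrt_le_sqrt h2
  _ = h + Real.sqrt (δ*r) := Real.sqrt_sq (by linarith [Real.sqrt_nonneg (δ*r)])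
  _ ≤ h + ε/8 := by linarith

set_option maxHeartbeats 1000000 in
lemma geo {E : Type*} [NormedAddCommGroup E] [InnerProductSpace ℝ E]
    (u y₀ y₁ : E) (hu : ‖u‖ = 1) (hr2 : ‖y₁ - y₀‖ ≤ 2)
    (ht : 0 ≤ ⟪y₀ - y₁, u⟫) (hout : 2 * ⟪y₀ - y₁, u⟫ < ‖y₁ - y₀‖ ^ 2) :
    ∃ z : E, ⟪y₀, u⟫ < ⟪z, u⟫ ∧ ∀ c, ‖c - y₀‖ ≤ 1 → ‖c - y₁‖ ≤ 1 → ‖z - c‖ ≤ 1 := by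
  set r : ℝ := ‖y₁ - y₀‖ with hr_def
  set t : ℝ := ⟪y₀ - y₁, u⟫ with ht_def
  clear_value r t
  have hr0 : 0 < r := by
    rcases (norm_nonneg (y₁ - y₀)).lt_or_eq with h | h
    · rw [hr_def]; exact h
    · exfalso
      have h1 : r = 0 := by rw [hr_def, ← h]
      nlinarith
  have htr : t ≤ r := by
    rw [ht_def, hr_def]
    calc ⟪y₀ - y₁, u⟫ ≤ ‖y₀ - y₁‖ * ‖u‖ := real_inner_le_norm _ _
    _ = ‖y₀ - y₁‖ := by rw [hu, mul_one]
    _ = ‖y₁ - y₀‖ := norm_sub_rev _ _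
  have ht2 : t ≤ 2 := htr.trans hr2
  set e : E := r⁻¹ • (y₁ - y₀) with he_def
  clear_value e
  have he : ‖e‖ = 1 := by
    rw [he_def, norm_smul, norm_inv, Real.norm_eq_abs, abs_of_pos hr0, ← hr_def,
      inv_mul_cancel₀ hr0.ne']
  have her : y₁ - y₀ = r • e := by
    rw [he_def, smul_smul, mul_inv_cancel₀ hr0.ne', one_smul]
  have hee : ⟪e, e⟫ = 1 := by
    rw [real_inner_self_eq_norm_sq, he]; norm_num
  have heu : ⟪e, u⟫ = -(t / r) := by
    rw [he_def, real_inner_smul_left]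
    rw [show y₁ - y₀ = -(y₀ - y₁) by abel, inner_neg_left, ← ht_def]
    field_simp
  set v : E := u - ⟪u, e⟫ • e with hv_def
  clear_value v
  have hue : ⟪u, e⟫ = -(t/r) := by rw [real_inner_comm]; exact heu
  have hve : ⟪v, e⟫ = 0 := by
    rw [hv_def, inner_sub_left, real_inner_smul_left, hee]; ring
  have hvu : ⟪v, u⟫ = 1 - (t/r)^2 := by
    rw [hv_def, inner_sub_left, real_inner_smul_left, real_inner_self_eq_norm_sq, hu, hue, heu]
    ring
  set β : ℝ := ‖v‖ with hβ_def
  clear_value β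
  have hβ2 : β ^ 2 = 1 - (t/r)^2 := by
    rw [hβ_def, ← real_inner_self_eq_norm_sq, hv_def, inner_sub_right, ← hv_def, hvu]
    rw [show ⟪v, ⟪u,e⟫ • e⟫ = ⟪u,e⟫ * ⟪v, e⟫ by rw [real_inner_smul_right], hve]
    ring
  have hβ0 : 0 ≤ β := by rw [hβ_def]; exact norm_nonneg v
  have hβpos : 0 < β := by
    rcases hβ0.lt_or_eq with h | h
    · exact h
    · exfalso
      have h1 : (t/r)^2 = 1 := by nlinarith
      have h2 : t/r = 1 := by
        have h3 : 0 ≤ t / r := div_nonneg ht hr0.le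
        nlinarith
      have h4 : t = r := by field_simp at h2; linarith
      nlinarith
  have hβ1 : β ≤ 1 := by nlinarith [sq_nonneg (t/r)]
  set f : E := β⁻¹ • v with hf_def
  clear_value f
  have hf : ‖f‖ = 1 := by
    rw [hf_def, norm_smul, norm_inv, Real.norm_eq_abs, abs_of_pos hβpos, ← hβ_def,
      inv_mul_cancel₀ hβpos.ne']
  have hfe : ⟪f, e⟫ = 0 := by rw [hf_def, real_inner_smul_left, hve]; ring
  have hfu : ⟪f, u⟫ = β := by
    rw [hf_def, real_inner_smul_left, hvu, ← hβ2, sq]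
    field_simp
  have hβr2 : β^2 * r^2 = r^2 - t^2 := by
    have h9 := hβ2
    field_simp at h9
    nlinarith [h9]
  set h : ℝ := Real.sqrt (1 - r^2/4) with hh_def
  clear_value h
  have hh0 : 0 ≤ h := hh_def ▸ Real.sqrt_nonneg _
  have hh2 : h ^ 2 = 1 - r^2/4 := by rw [hh_def]; exact Real.sq_sqrt (by nlinarith)
  have hh1 : h ≤ 1 := by nlinarith
  obtain ⟨hε, hε4, hεr⟩ := auxEps β r t h hr0 hr2 ht hout hβ0 hβ1 hβpos hβr2 hh0 hh1 hh2
  set ε : ℝ := β * r^2 - 2*t*h with hε_def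
  clear_value ε
  set δ : ℝ := ε^2/128 with hδ_def
  clear_value δ
  have hδ0 : 0 < δ := by rw [hδ_def]; positivity
  have hδr : δ < r := by
    have e1 : ε^2 ≤ 4*ε := by
      have h9 := mul_le_mul_of_nonneg_left hε4 hε.le
      calc ε^2 = ε*ε := sq ε
      _ ≤ ε*4 := h9
      _ = 4*ε := by ring
    have e2 : r^2 ≤ 2*r := by
      have h9 := mul_le_mul_of_nonneg_left hr2 hr0.le
      calc r^2 = r*r := sq r
      _ ≤ r*2 := h9
      _ = 2*r := by ring
    rw [hδ_def]
    linarith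
  set sW : ℝ := Real.sqrt (h^2 + δ*(r-δ)) with hsW_def
  clear_value sW
  have hDpos : 0 < h^2 + δ*(r-δ) := by
    have h9 := mul_pos hδ0 (by linarith : 0 < r - δ)
    have h10 := sq_nonneg h
    linarith
  have hsW2 : sW^2 = h^2 + δ*(r-δ) := by rw [hsW_def]; exact Real.sq_sqrt hDpos.le
  have hsW0 : 0 < sW := by rw [hsW_def]; exact Real.sqrt_pos.2 hDpos
  have hsWh : h ≤ sW := by
    rw [hsW_def]
    have h1 : Real.sqrt (h^2) ≤ Real.sqrt (h^2 + δ*(r-δ)) := Real.sqrt_le_sqrt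
      (by linarith [mul_pos hδ0 (by linarith : 0 < r - δ)])
    rwa [Real.sqrt_sq hh0] at h1
  have hsum0 : 0 < sW + h := by linarith
  set Y : ℝ := sW - h with hY_def
  clear_value Y
  have hYid : Y * (sW + h) = δ * (r - δ) := by rw [hY_def]; linear_combination hsW2
  have hsWub : sW ≤ h + ε/8 := by rw [hsW_def]; exact auxSqrtUB h δ r ε hh0 hδ0 hδr hr2 hδ_def hε
  have hY0 : 0 ≤ Y := by rw [hY_def]; linarith
  set z : E := y₀ + δ • e + Y • f with hz_def
  clear_value z
  have hzy : z - y₀ = δ • e + Y • f := by rw [hz_def]; abel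
  have hzu : ⟪z, u⟫ = ⟪y₀, u⟫ + δ * (-(t/r)) + Y * β := by
    have h1 : ⟪z - y₀, u⟫ = δ * (-(t/r)) + Y * β := by
      rw [hzy, inner_add_left, real_inner_smul_left, real_inner_smul_left, heu, hfu]
    have h2 : ⟪z, u⟫ = ⟪y₀, u⟫ + ⟪z - y₀, u⟫ := by
      rw [← inner_add_left]
      congr 1
      abel
    rw [h2, h1]
    ring
  have hA : δ * t < Y * β * r :=
    auxA r t β h ε δ sW Y hr0 hr2 ht ht2 hβpos hβ1 hh0 hε_def hε hε4 hδ_def hδr hsum0 hYid hsWub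
  have hAfin : ⟪y₀, u⟫ < ⟪z, u⟫ := by
    rw [hzu]
    have h7 : δ * t / r < Y * β := by rw [div_lt_iff₀ hr0]; linarith
    have h8 : δ * (-(t/r)) = -(δ*t/r) := by ring
    rw [h8]
    linarith
  refine ⟨z, hAfin, ?_⟩
  -- part (B)
  intro c hc0 hc1
  set α : ℝ := ⟪c - y₀, e⟫ with hα_def
  clear_value α
  set w : E := c - y₀ - α • e with hw_def
  clear_value w
  have hwe : ⟪w, e⟫ = 0 := by
    rw [hw_def, inner_sub_left, real_inner_smul_left, hee, ← hα_def]; ring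
  have hew : ⟪e, w⟫ = 0 := by rw [real_inner_comm]; exact hwe
  set s : ℝ := ‖w‖ with hs_def
  clear_value s
  have hs0 : 0 ≤ s := by rw [hs_def]; exact norm_nonneg _
  have hcy0 : c - y₀ = α • e + w := by rw [hw_def]; abel
  have hcy1 : c - y₁ = (α - r) • e + w := by
    have h9 : c - y₁ = (c - y₀) - (y₁ - y₀) := by abel
    rw [h9, her, hcy0, sub_smul]
    abel
  have hdec0 : ‖c - y₀‖^2 = α^2 + s^2 := by
    rw [hs_def, hcy0, norm_add_sq_real, real_inner_smul_left, hew, norm_smul, he,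
      Real.norm_eq_abs, mul_one, sq_abs]
    ring
  have hdec1 : ‖c - y₁‖^2 = (α - r)^2 + s^2 := by
    rw [hs_def, hcy1, norm_add_sq_real, real_inner_smul_left, hew, norm_smul, he,
      Real.norm_eq_abs, mul_one, sq_abs]
    ring
  have hn0 : α^2 + s^2 ≤ 1 := by
    rw [← hdec0]
    calc ‖c - y₀‖^2 ≤ 1^2 := pow_le_pow_left₀ (norm_nonneg _) hc0 2
    _ = 1 := one_pow 2
  have hn1 : (α - r)^2 + s^2 ≤ 1 := by
    rw [← hdec1]
    calc ‖c - y₁‖^2 ≤ 1^2 := pow_le_pow_left₀ (norm_nonneg _) hc1 2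
    _ = 1 := one_pow 2
  have hz_c : z - c = (δ - α) • e + (Y • f - w) := by
    rw [hz_def, hw_def, sub_smul]; abel
  have hfw : |⟪f, w⟫| ≤ s := by
    calc |⟪f, w⟫| ≤ ‖f‖ * ‖w‖ := abs_real_inner_le_norm _ _
    _ = s := by rw [hf, one_mul, ← hs_def]
  have hval : ‖z - c‖^2 = (δ - α)^2 + (Y^2 - 2*Y*⟪f,w⟫ + s^2) := by
    have hcross : ⟪(δ - α) • e, Y • f - w⟫ = 0 := by
      have h9 : ⟪e, f⟫ = 0 := by rw [real_inner_comm]; exact hfe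
      rw [inner_sub_right, real_inner_smul_left, real_inner_smul_left, real_inner_smul_right,
        h9, hew]
      ring
    rw [hs_def, hz_c, norm_add_sq_real, hcross, norm_smul, he, Real.norm_eq_abs, mul_one,
      sq_abs, norm_sub_sq_real, real_inner_smul_left, norm_smul, hf, Real.norm_eq_abs, mul_one,
      sq_abs]
    ring
  have hfinal : ‖z - c‖^2 ≤ 1 := by
    rw [hval, hY_def]
    exact auxB r δ h sW α s ⟪f,w⟫ hr0 hδ0 hδr hh0 hh2 hsW2 hsWh hs0 hfw hn0 hn1
  by_contra hx
  push_neg at hx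
  have h2 : 1 < ‖z - c‖^2 := by
    calc (1:ℝ) = 1*1 := by ring
    _ < ‖z-c‖*‖z-c‖ := by
        apply mul_lt_mul'' hx hx <;> norm_num
    _ = ‖z-c‖^2 := (sq _).symm
  linarith

lemma convex_cDual {n : ℕ} (A : Set (EuclideanSpace ℝ (Fin n))) : Convex ℝ (cDual A) := by
  intro y₁ h₁ y₂ h₂ a b ha hb hab x hx
  have e1 := h₁ x hx
  have e2 := h₂ x hx
  have hx1 : x = a • x + b • x := by rw [← add_smul, hab, one_smul]
  have hrw : x - (a • y₁ + b • y₂) = a • (x - y₁) + b • (x - y₂) := by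
    calc x - (a • y₁ + b • y₂) = (a • x + b • x) - (a • y₁ + b • y₂) := by rw [← hx1]
    _ = a • (x - y₁) + b • (x - y₂) := by rw [smul_sub, smul_sub]; abel
  calc ‖x - (a • y₁ + b • y₂)‖ = ‖a • (x - y₁) + b • (x - y₂)‖ := by rw [hrw]
  _ ≤ ‖a • (x - y₁)‖ + ‖b • (x - y₂)‖ := norm_add_le _ _
  _ = a * ‖x - y₁‖ + b * ‖x - y₂‖ := by
      rw [norm_smul, norm_smul, Real.norm_eq_abs, Real.norm_eq_abs, abs_of_nonneg ha,
        abs_of_nonneg hb]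
  _ ≤ a * 1 + b * 1 := by
      have := mul_le_mul_of_nonneg_left e1 ha
      have := mul_le_mul_of_nonneg_left e2 hb
      linarith
  _ = 1 := by rw [mul_one, mul_one, hab]

lemma isClosed_cDual {n : ℕ} (A : Set (EuclideanSpace ℝ (Fin n))) : IsClosed (cDual A) := by
  have h : cDual A = ⋂ x ∈ A, {y | ‖x - y‖ ≤ 1} := by
    ext y; simp [cDual]
  rw [h]
  exact isClosed_biInter fun x _ =>
    isClosed_le ((continuous_const.sub continuous_id).norm) continuous_const

lemma isCompact_cDual {n : ℕ} {K : Set (EuclideanSpace ℝ (Fin n))} (hne : K.Nonempty) :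
    IsCompact (cDual K) := by
  obtain ⟨x₀, hx₀⟩ := hne
  have hsub : cDual K ⊆ Metric.closedBall x₀ 1 := by
    intro y hy
    have h1 := hy x₀ hx₀
    rw [Metric.mem_closedBall, dist_eq_norm, ← norm_sub_rev]
    exact h1
  exact (isCompact_closedBall x₀ 1).of_isClosed_subset (isClosed_cDual K) hsub

lemma nonempty_cDual {n : ℕ} (hn : 1 ≤ n) {K : Set (EuclideanSpace ℝ (Fin n))}
    (hcomp : IsCompact K) (hbb : K = cDual (cDual K)) : (cDual K).Nonempty := by
  by_contra hemp
  rw [Set.not_nonempty_iff_eq_empty] at hemp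
  have hKuniv : K = Set.univ := by
    rw [hbb, hemp]
    ext y
    simp [cDual]
  obtain ⟨R, hR⟩ := hcomp.isBounded.subset_closedBall 0
  set p : EuclideanSpace ℝ (Fin n) := EuclideanSpace.single (⟨0, hn⟩ : Fin n) (|R| + 1) with hp_def
  have hpK : p ∈ K := by rw [hKuniv]; trivial
  have hpball := hR hpK
  rw [Metric.mem_closedBall, dist_zero_right] at hpball
  have hpn : ‖p‖ = |R| + 1 := by
    rw [hp_def, EuclideanSpace.norm_single, Real.norm_eq_abs, abs_of_nonneg (by positivity)]
  rw [hpn] at hpball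
  have := le_abs_self R
  linarith

lemma key_exists {n : ℕ} (hn : 1 ≤ n) (K : Set (EuclideanSpace ℝ (Fin n))) (hne : K.Nonempty)
    (hcomp : IsCompact K) (hbb : K = cDual (cDual K))
    (u : EuclideanSpace ℝ (Fin n)) (hu : ‖u‖ = 1) :
    ∃ y ∈ cDual K, y - u ∈ K := by
  have hKc_comp : IsCompact (cDual K) := isCompact_cDual hne
  have hKc_ne : (cDual K).Nonempty := nonempty_cDual hn hcomp hbb
  have hcont : Continuous fun y : EuclideanSpace ℝ (Fin n) => (⟪y, u⟫ : ℝ) :=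
    continuous_id.inner continuous_const
  obtain ⟨y₀, hy₀, hmax⟩ := hKc_comp.exists_isMaxOn hKc_ne hcont.continuousOn
  refine ⟨y₀, hy₀, ?_⟩
  rw [hbb]
  intro y hy
  by_contra hcon
  push_neg at hcon
  have ht : 0 ≤ ⟪y₀ - y, u⟫ := by
    rw [inner_sub_left]
    have h0 : (⟪y, u⟫ : ℝ) ≤ ⟪y₀, u⟫ := hmax hy
    linarith
  have hr2' : ‖y - y₀‖ ≤ 2 := by
    obtain ⟨x₀, hx₀⟩ := hne
    have h1 := hy₀ x₀ hx₀
    have h2 := hy x₀ hx₀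
    calc ‖y - y₀‖ = ‖(x₀ - y₀) - (x₀ - y)‖ := by congr 1; abel
    _ ≤ ‖x₀ - y₀‖ + ‖x₀ - y‖ := norm_sub_le _ _
    _ ≤ 2 := by linarith
  have hout : 2 * ⟪y₀ - y, u⟫ < ‖y - y₀‖ ^ 2 := by
    have h4 : y - (y₀ - u) = (y - y₀) + u := by abel
    have h3 : ‖y - (y₀ - u)‖^2 = ‖y - y₀‖^2 + 2*⟪y - y₀, u⟫ + 1 := by
      rw [h4, norm_add_sq_real, hu]; ring
    have h5 : 1 < ‖y - (y₀ - u)‖^2 := by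
      nlinarith [hcon, norm_nonneg (y - (y₀ - u))]
    have h6 : ⟪y - y₀, u⟫ = -⟪y₀ - y, u⟫ := by
      rw [show y - y₀ = -(y₀ - y) by abel, inner_neg_left]
    rw [h6] at h3
    linarith
  obtain ⟨z, hz1, hz2⟩ := geo u y₀ y hu hr2' ht hout
  have hzK : z ∈ cDual K := by
    intro x hx
    have h7 := hz2 x (hy₀ x hx) (hy x hx)
    rw [norm_sub_rev]
    exact h7
  have hzle : (⟪z, u⟫ : ℝ) ≤ ⟪y₀, u⟫ := hmax hzK
  exact absurd hzle (not_le.2 hz1)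

/-- For a nonempty compact ball-body `K`, the Minkowski difference `K - K^c` is the closed
unit ball; equivalently `h_{K^c}(u) = 1 - h_K(-u)` for every unit vector `u`. -/
theorem stmt2 (n : ℕ) (hn : 1 ≤ n) (K : Set (EuclideanSpace ℝ (Fin n)))
    (hne : K.Nonempty) (hcomp : IsCompact K) (hbb : K = cDual (cDual K)) :
    K - cDual K = closedBall (0 : EuclideanSpace ℝ (Fin n)) 1 ∧
      ∀ u : EuclideanSpace ℝ (Fin n), ‖u‖ = 1 →
        suppFn (cDual K) u = 1 - suppFn K (-u) := by
  have hKc_comp : IsCompact (cDual K) := isCompact_cDual hne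
  have hKc_ne : (cDual K).Nonempty := nonempty_cDual hn hcomp hbb
  have hunit : ∀ w : EuclideanSpace ℝ (Fin n), ‖w‖ = 1 → w ∈ K - cDual K := by
    intro w hw
    obtain ⟨y, hy, hyK⟩ := key_exists hn K hne hcomp hbb (-w) (by rw [norm_neg]; exact hw)
    rw [Set.mem_sub]
    exact ⟨y - -w, hyK, y, hy, by abel⟩
  constructor
  · ext z
    constructor
    · intro hz
      rw [Set.mem_sub] at hz
      obtain ⟨x, hx, y, hy, rfl⟩ := hz
      rw [Metric.mem_closedBall, dist_zero_right]
      exact hy x hx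
    · intro hz
      rw [Metric.mem_closedBall, dist_zero_right] at hz
      have hKconv : Convex ℝ K := by rw [hbb]; exact convex_cDual _
      have hconv : Convex ℝ (K - cDual K) := hKconv.sub (convex_cDual K)
      obtain ⟨u, c, hu, hc, hzc⟩ : ∃ (u : EuclideanSpace ℝ (Fin n)) (c : ℝ),
          ‖u‖ = 1 ∧ |c| ≤ 1 ∧ z = c • u := by
        rcases eq_or_ne z 0 with rfl | hz0
        · refine ⟨EuclideanSpace.single (⟨0, hn⟩ : Fin n) (1:ℝ), 0, ?_, by norm_num, by simp⟩
          rw [EuclideanSpace.norm_single]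
          norm_num
        · refine ⟨‖z‖⁻¹ • z, ‖z‖, norm_smul_inv_norm hz0, ?_, ?_⟩
          · rw [abs_of_nonneg (norm_nonneg z)]; exact hz
          · rw [smul_smul, mul_inv_cancel₀ (norm_ne_zero_iff.2 hz0), one_smul]
      have hrep : z = ((1+c)/2) • u + ((1-c)/2) • (-u) := by
        rw [smul_neg, ← sub_eq_add_neg, ← sub_smul, hzc]
        congr 1
        ring
      rw [hrep]
      have hc' := abs_le.mp hc
      exact hconv (hunit u hu) (hunit (-u) (by rw [norm_neg]; exact hu))
        (by linarith) (by linarith) (by ring)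
  · intro u hu
    obtain ⟨ys, hys, hysK⟩ := key_exists hn K hne hcomp hbb u hu
    have hcont : ∀ w : EuclideanSpace ℝ (Fin n),
        Continuous fun x : EuclideanSpace ℝ (Fin n) => (⟪x, w⟫ : ℝ) :=
      fun w => continuous_id.inner continuous_const
    have hbddK : BddAbove ((fun x => (⟪x, -u⟫ : ℝ)) '' K) :=
      (hcomp.image (hcont (-u))).bddAbove
    have hbddKc : BddAbove ((fun x => (⟪x, u⟫ : ℝ)) '' cDual K) :=
      (hKc_comp.image (hcont u)).bddAbove
    apply le_antisymm
    · apply csSup_le (hKc_ne.image _)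
      rintro b ⟨y, hy, rfl⟩
      have h2 : suppFn K (-u) ≤ 1 - ⟪y, u⟫ := by
        apply csSup_le (hne.image _)
        rintro b ⟨x, hx, rfl⟩
        have h3 : ⟪y - x, u⟫ ≤ ‖y - x‖ * ‖u‖ := real_inner_le_norm _ _
        have h4 : ‖y - x‖ ≤ 1 := by rw [norm_sub_rev]; exact hy x hx
        rw [hu, mul_one] at h3
        have h5 : ⟪y - x, u⟫ = ⟪y, u⟫ - ⟪x, u⟫ := by rw [inner_sub_left]
        show (⟪x, -u⟫ : ℝ) ≤ 1 - ⟪y, u⟫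
        rw [inner_neg_right]
        linarith
      have h6 : (⟪y, u⟫ : ℝ) ≤ suppFn (cDual K) u := le_csSup hbddKc (Set.mem_image_of_mem _ hy)
      linarith [h2]
    · have h7 : (1 : ℝ) - ⟪ys, u⟫ ≤ suppFn K (-u) := by
        have h8 : (⟪ys - u, -u⟫ : ℝ) ≤ suppFn K (-u) :=
          le_csSup hbddK (Set.mem_image_of_mem _ hysK)
        have h9 : (⟪ys - u, -u⟫ : ℝ) = 1 - ⟪ys, u⟫ := by
          rw [inner_neg_right, inner_sub_left, real_inner_self_eq_norm_sq, hu]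
          ring
        rw [h9] at h8
        exact h8
      have h10 : (⟪ys, u⟫ : ℝ) ≤ suppFn (cDual K) u :=
        le_csSup hbddKc (Set.mem_image_of_mem _ hys)
      linarith
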